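/- Let n > 1 and let ρ ∈ ℂ be a primitive n-th root of unity. Let A = ℂ_ρ[x,y,z] be the quotient of the free ℂ-algebra on generators x, y, z by the two-sided ideal generated by xy − ρyx, yz − ρzy, zx − ρxz. Then the center Z(A) equals the ℂ-subalgebra of A generated by the images of x^n, y^n, z^n and xyz. -/

import Mathlib

/-- The generators of the free algebra on three variables. -/
noncomputable def freeGen (i : Fin 3) : FreeAlgebra ℂ (Fin 3) := FreeAlgebra.ι ℂ i

/-- The defining relations of the quantum affine 3-space `ℂ_ρ[x,y,z]`:
`xy = ρ yx`, `yz = ρ zy`, `zx = ρ xz`. -/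
inductive QuantumRel (ρ : ℂ) : FreeAlgebra ℂ (Fin 3) → FreeAlgebra ℂ (Fin 3) → Prop
  | xy : QuantumRel ρ (freeGen 0 * freeGen 1) (ρ • (freeGen 1 * freeGen 0))
  | yz : QuantumRel ρ (freeGen 1 * freeGen 2) (ρ • (freeGen 2 * freeGen 1))
  | zx : QuantumRel ρ (freeGen 2 * freeGen 0) (ρ • (freeGen 0 * freeGen 2))

/-- The quantum affine 3-space `ℂ_ρ[x,y,z]`. -/
noncomputable abbrev QuantumAlg (ρ : ℂ) := RingQuot (QuantumRel ρ)

/-- The image of `x` in `ℂ_ρ[x,y,z]`. -/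
noncomputable def qX (ρ : ℂ) : QuantumAlg ρ := RingQuot.mkAlgHom ℂ (QuantumRel ρ) (freeGen 0)

/-- The image of `y` in `ℂ_ρ[x,y,z]`. -/
noncomputable def qY (ρ : ℂ) : QuantumAlg ρ := RingQuot.mkAlgHom ℂ (QuantumRel ρ) (freeGen 1)

/-- The image of `z` in `ℂ_ρ[x,y,z]`. -/
noncomputable def qZ (ρ : ℂ) : QuantumAlg ρ := RingQuot.mkAlgHom ℂ (QuantumRel ρ) (freeGen 2)


section Rel
variable (ρ : ℂ)

lemma rel_xy : qX ρ * qY ρ = ρ • (qY ρ * qX ρ) := by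
  have := RingQuot.mkAlgHom_rel ℂ (QuantumRel.xy (ρ := ρ))
  simpa [qX, qY, map_mul, map_smul] using this

lemma rel_yz : qY ρ * qZ ρ = ρ • (qZ ρ * qY ρ) := by
  have := RingQuot.mkAlgHom_rel ℂ (QuantumRel.yz (ρ := ρ))
  simpa [qY, qZ, map_mul, map_smul] using this

lemma rel_zx : qZ ρ * qX ρ = ρ • (qX ρ * qZ ρ) := by
  have := RingQuot.mkAlgHom_rel ℂ (QuantumRel.zx (ρ := ρ))
  simpa [qZ, qX, map_mul, map_smul] using this

end Rel

section Swap
variable {A : Type*} [Ring A] [Algebra ℂ A] {s : ℂ} {u v : A}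

lemma swap_one_pow (h : u * v = s • (v * u)) (k : ℕ) :
    u * v ^ k = s ^ k • (v ^ k * u) := by
  induction k with
  | zero => simp
  | succ k ih =>
    calc u * v ^ (k+1) = (u * v ^ k) * v := by rw [pow_succ, mul_assoc]
    _ = s ^ k • (v ^ k * (u * v)) := by rw [ih, smul_mul_assoc, mul_assoc]
    _ = s ^ k • (v ^ k * (s • (v * u))) := by rw [h]
    _ = s ^ (k+1) • (v ^ (k+1) * u) := by
        rw [mul_smul_comm, smul_smul, ← pow_succ, pow_succ v, mul_assoc]

lemma swap_pow (h : u * v = s • (v * u)) (m k : ℕ) :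
    u ^ m * v ^ k = s ^ (m * k) • (v ^ k * u ^ m) := by
  induction m with
  | zero => simp
  | succ m ih =>
    calc u ^ (m+1) * v ^ k = u ^ m * (u * v ^ k) := by
          rw [pow_succ, mul_assoc]
    _ = s ^ k • (u ^ m * (v ^ k * u)) := by rw [swap_one_pow h, mul_smul_comm]
    _ = s ^ k • ((u ^ m * v ^ k) * u) := by rw [mul_assoc]
    _ = s ^ k • ((s ^ (m*k) • (v ^ k * u ^ m)) * u) := by rw [ih]
    _ = s ^ ((m+1) * k) • (v ^ k * u ^ (m+1)) := by
        rw [smul_mul_assoc, smul_smul, mul_assoc, ← pow_succ, ← pow_add]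
        congr 1
        ring

end Swap

noncomputable def mono (ρ : ℂ) (v : ℕ × ℕ × ℕ) : QuantumAlg ρ :=
  qX ρ ^ v.1 * qY ρ ^ v.2.1 * qZ ρ ^ v.2.2

section MonoMul
variable {ρ : ℂ} (hρ0 : ρ ≠ 0)

lemma rel_yx (hρ0 : ρ ≠ 0) : qY ρ * qX ρ = ρ⁻¹ • (qX ρ * qY ρ) := by
  rw [rel_xy, smul_smul, inv_mul_cancel₀ hρ0, one_smul]

lemma rel_zy (hρ0 : ρ ≠ 0) : qZ ρ * qY ρ = ρ⁻¹ • (qY ρ * qZ ρ) := by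
  rw [rel_yz, smul_smul, inv_mul_cancel₀ hρ0, one_smul]

lemma mono_mul (hρ0 : ρ ≠ 0) (v w : ℕ × ℕ × ℕ) :
    mono ρ v * mono ρ w =
      (ρ ^ (v.2.2 * w.1) * (ρ⁻¹) ^ (v.2.1 * w.1 + v.2.2 * w.2.1)) •
        mono ρ (v.1 + w.1, v.2.1 + w.2.1, v.2.2 + w.2.2) := by
  obtain ⟨a, b, c⟩ := v
  obtain ⟨a', b', c'⟩ := w
  simp only [mono]
  set X := qX ρ; set Y := qY ρ; set Z := qZ ρ
  have hZX : Z ^ c * X ^ a' = ρ ^ (c * a') • (X ^ a' * Z ^ c) := swap_pow (rel_zx ρ) c a'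
  have hYX : Y ^ b * X ^ a' = (ρ⁻¹) ^ (b * a') • (X ^ a' * Y ^ b) := swap_pow (rel_yx hρ0) b a'
  have hZY : Z ^ c * Y ^ b' = (ρ⁻¹) ^ (c * b') • (Y ^ b' * Z ^ c) := swap_pow (rel_zy hρ0) c b'
  calc X ^ a * Y ^ b * Z ^ c * (X ^ a' * Y ^ b' * Z ^ c')
      = X ^ a * Y ^ b * (Z ^ c * X ^ a') * (Y ^ b' * Z ^ c') := by
        simp only [mul_assoc]
    _ = ρ ^ (c * a') • (X ^ a * (Y ^ b * X ^ a') * (Z ^ c * Y ^ b') * Z ^ c') := by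
        rw [hZX]; simp only [mul_smul_comm, smul_mul_assoc, mul_assoc]
    _ = (ρ ^ (c * a') * (ρ⁻¹) ^ (b * a' + c * b')) •
          (X ^ (a + a') * Y ^ (b + b') * Z ^ (c + c')) := by
        rw [hYX, hZY]
        simp only [mul_smul_comm, smul_mul_assoc, smul_smul]
        congr 1
        · ring
        · simp only [pow_add, mul_assoc]

end MonoMul

/-! ### The module of "polynomials" on which `QuantumAlg ρ` acts faithfully enough -/

abbrev QV := (ℕ × ℕ × ℕ) →₀ ℂ

noncomputable def qop (g : ℕ × ℕ × ℕ → ℂ) (sh : ℕ × ℕ × ℕ → ℕ × ℕ × ℕ) : QV →ₗ[ℂ] QV :=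
  Finsupp.lsum ℂ fun v => LinearMap.toSpanSingleton ℂ QV (g v • Finsupp.single (sh v) 1)

lemma qop_single (g : ℕ × ℕ × ℕ → ℂ) (sh : ℕ × ℕ × ℕ → ℕ × ℕ × ℕ) (v : ℕ × ℕ × ℕ) (t : ℂ) :
    qop g sh (Finsupp.single v t) = (t * g v) • Finsupp.single (sh v) 1 := by
  simp [qop, LinearMap.toSpanSingleton_apply, smul_smul]

noncomputable def Xop (ρ : ℂ) : Module.End ℂ QV :=
  qop (fun v => ρ ^ v.2.1) (fun v => (v.1 + 1, v.2.1, v.2.2))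
noncomputable def Yop (ρ : ℂ) : Module.End ℂ QV :=
  qop (fun v => ρ ^ v.2.2) (fun v => (v.1, v.2.1 + 1, v.2.2))
noncomputable def Zop (ρ : ℂ) : Module.End ℂ QV :=
  qop (fun v => ρ ^ v.1) (fun v => (v.1, v.2.1, v.2.2 + 1))

noncomputable def qopF (ρ : ℂ) : Fin 3 → Module.End ℂ QV := ![Xop ρ, Yop ρ, Zop ρ]

noncomputable def qphi (ρ : ℂ) : QuantumAlg ρ →ₐ[ℂ] Module.End ℂ QV := by
  refine RingQuot.liftAlgHom ℂ ⟨FreeAlgebra.lift ℂ (qopF ρ), ?_⟩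
  rintro a b (h | h | h) <;>
  · apply LinearMap.ext
    intro u
    induction u using Finsupp.induction with
    | zero => simp
    | single_add v t f _ _ ih =>
      simp only [map_add, map_mul, map_smul, freeGen, FreeAlgebra.lift_ι_apply, qopF,
        Matrix.cons_val_zero, Matrix.cons_val_one, Matrix.head_cons, Matrix.cons_val_two,
        Matrix.tail_cons, Module.End.mul_apply, LinearMap.smul_apply] at ih ⊢
      rw [ih]
      congr 1
      simp only [Xop, Yop, Zop, qop_single, map_smul, smul_smul]
      congr 1
      ring

section Phi
variable (ρ : ℂ)

lemma qphi_qX : qphi ρ (qX ρ) = Xop ρ := by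
  simp [qphi, qX, RingQuot.liftAlgHom_mkAlgHom_apply, freeGen, qopF]

lemma qphi_qY : qphi ρ (qY ρ) = Yop ρ := by
  simp [qphi, qY, RingQuot.liftAlgHom_mkAlgHom_apply, freeGen, qopF]

lemma qphi_qZ : qphi ρ (qZ ρ) = Zop ρ := by
  simp [qphi, qZ, RingQuot.liftAlgHom_mkAlgHom_apply, freeGen, qopF]

lemma Xop_pow (a a₀ b₀ c₀ : ℕ) :
    ((Xop ρ) ^ a) (Finsupp.single (a₀, b₀, c₀) 1) =
      ρ ^ (a * b₀) • Finsupp.single (a₀ + a, b₀, c₀) 1 := by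
  induction a with
  | zero => simp
  | succ a ih =>
    rw [pow_succ', Module.End.mul_apply, ih, map_smul, Xop, qop_single]
    rw [smul_smul]
    congr 1
    ring

lemma Yop_pow (b a₀ b₀ c₀ : ℕ) :
    ((Yop ρ) ^ b) (Finsupp.single (a₀, b₀, c₀) 1) =
      ρ ^ (b * c₀) • Finsupp.single (a₀, b₀ + b, c₀) 1 := by
  induction b with
  | zero => simp
  | succ b ih =>
    rw [pow_succ', Module.End.mul_apply, ih, map_smul, Yop, qop_single]
    rw [smul_smul]
    congr 1
    ring

lemma Zop_pow (c a₀ b₀ c₀ : ℕ) :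
    ((Zop ρ) ^ c) (Finsupp.single (a₀, b₀, c₀) 1) =
      ρ ^ (c * a₀) • Finsupp.single (a₀, b₀, c₀ + c) 1 := by
  induction c with
  | zero => simp
  | succ c ih =>
    rw [pow_succ', Module.End.mul_apply, ih, map_smul, Zop, qop_single]
    rw [smul_smul]
    congr 1
    ring

lemma qphi_mono (v w : ℕ × ℕ × ℕ) :
    qphi ρ (mono ρ v) (Finsupp.single w 1) =
      ρ ^ (v.2.2 * w.1 + v.2.1 * (w.2.2 + v.2.2) + v.1 * (w.2.1 + v.2.1)) •
        Finsupp.single (w.1 + v.1, w.2.1 + v.2.1, w.2.2 + v.2.2) 1 := by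
  obtain ⟨a, b, c⟩ := v
  obtain ⟨a₀, b₀, c₀⟩ := w
  simp only [mono, map_mul, map_pow, qphi_qX, qphi_qY, qphi_qZ, Module.End.mul_apply]
  rw [Zop_pow, map_smul, Yop_pow, map_smul, map_smul, Xop_pow]
  simp only [smul_smul]
  congr 1
  ring

end Phi

section Span
variable {ρ : ℂ}

lemma mono_mul_mem (hρ0 : ρ ≠ 0) {p q : QuantumAlg ρ}
    (hp : p ∈ Submodule.span ℂ (Set.range (mono ρ)))
    (hq : q ∈ Submodule.span ℂ (Set.range (mono ρ))) :
    p * q ∈ Submodule.span ℂ (Set.range (mono ρ)) := by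
  induction hp, hq using Submodule.span_induction₂ with
  | mem_mem x y hx hy =>
    obtain ⟨v, rfl⟩ := hx
    obtain ⟨w, rfl⟩ := hy
    rw [mono_mul hρ0]
    exact Submodule.smul_mem _ _ (Submodule.subset_span ⟨_, rfl⟩)
  | zero_left y hy => simp
  | zero_right x hx => simp
  | add_left x y z hx hy hz h1 h2 => rw [add_mul]; exact Submodule.add_mem _ h1 h2
  | add_right x y z hx hy hz h1 h2 => rw [mul_add]; exact Submodule.add_mem _ h1 h2
  | smul_left r x y hx hy h => rw [smul_mul_assoc]; exact Submodule.smul_mem _ _ h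
  | smul_right r x y hx hy h => rw [mul_smul_comm]; exact Submodule.smul_mem _ _ h

lemma mem_span_mono (hρ0 : ρ ≠ 0) (u : QuantumAlg ρ) :
    u ∈ Submodule.span ℂ (Set.range (mono ρ)) := by
  obtain ⟨f, rfl⟩ := RingQuot.mkAlgHom_surjective ℂ (QuantumRel ρ) u
  induction f using FreeAlgebra.induction with
  | grade0 r =>
    rw [AlgHom.commutes]
    have h1 : (1 : QuantumAlg ρ) ∈ Submodule.span ℂ (Set.range (mono ρ)) := by
      refine Submodule.subset_span ⟨(0,0,0), ?_⟩
      simp [mono]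
    simpa [Algebra.algebraMap_eq_smul_one] using Submodule.smul_mem _ r h1
  | grade1 i =>
    fin_cases i
    · exact Submodule.subset_span ⟨(1,0,0), by simp [mono, qX, freeGen]⟩
    · exact Submodule.subset_span ⟨(0,1,0), by simp [mono, qY, freeGen]⟩
    · exact Submodule.subset_span ⟨(0,0,1), by simp [mono, qZ, freeGen]⟩
  | mul a b ha hb => rw [map_mul]; exact mono_mul_mem hρ0 ha hb
  | add a b ha hb => rw [map_add]; exact Submodule.add_mem _ ha hb

end Span

section Eval

/-- Evaluation of a shifted-diagonal sum of singles at a shifted point. -/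
lemma sum_single_eval (l : QV) (g : ℕ × ℕ × ℕ → ℂ) (sh : ℕ × ℕ × ℕ → ℕ × ℕ × ℕ)
    (hsh : Function.Injective sh) (v₀ : ℕ × ℕ × ℕ) :
    (l.sum fun v c => (c * g v) • Finsupp.single (sh v) (1 : ℂ)) (sh v₀) = l v₀ * g v₀ := by
  classical
  rw [Finsupp.sum_apply, Finsupp.sum]
  rw [Finset.sum_eq_single v₀]
  · simp
  · intro v _ hne
    simp [Finsupp.single_eq_of_ne' (hsh.ne hne)]
  · intro h
    simp [Finsupp.notMem_support_iff.mp h]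

end Eval

section Central
variable {ρ : ℂ}

lemma shX_inj : Function.Injective (fun v : ℕ × ℕ × ℕ => (v.1 + 1, v.2.1, v.2.2)) := by
  intro a b h
  obtain ⟨a1, a2, a3⟩ := a; obtain ⟨b1, b2, b3⟩ := b
  simp only [Prod.mk.injEq] at h ⊢
  omega

lemma shZ_inj : Function.Injective (fun v : ℕ × ℕ × ℕ => (v.1, v.2.1, v.2.2 + 1)) := by
  intro a b h
  obtain ⟨a1, a2, a3⟩ := a; obtain ⟨b1, b2, b3⟩ := b
  simp only [Prod.mk.injEq] at h ⊢
  omega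

/-- The constraints satisfied by the coefficients of a central element. -/
lemma central_constraints (hρ0 : ρ ≠ 0) (l : QV)
    (hu : l.sum (fun v c => c • mono ρ v) ∈ Subalgebra.center ℂ (QuantumAlg ρ)) :
    ∀ v : ℕ × ℕ × ℕ, (l v * ρ ^ v.2.1 = l v * ρ ^ v.2.2) ∧
      (l v * ρ ^ v.1 = l v * ρ ^ v.2.1) := by
  classical
  set U : QuantumAlg ρ := l.sum (fun v c => c • mono ρ v) with hU
  set e0 : QV := Finsupp.single ((0:ℕ), (0:ℕ), (0:ℕ)) (1 : ℂ) with he0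
  have hUw : ∀ w : ℕ × ℕ × ℕ, qphi ρ U (Finsupp.single w 1) =
      l.sum fun v c =>
        (c * ρ ^ (v.2.2 * w.1 + v.2.1 * (w.2.2 + v.2.2) + v.1 * (w.2.1 + v.2.1))) •
          Finsupp.single (w.1 + v.1, w.2.1 + v.2.1, w.2.2 + v.2.2) (1:ℂ) := by
    intro w
    rw [hU, map_finsuppSum, LinearMap.finsupp_sum_apply]
    refine Finsupp.sum_congr fun v _ => ?_
    rw [map_smul, LinearMap.smul_apply, qphi_mono, smul_smul]
  have key1 : ∀ v : ℕ × ℕ × ℕ, l v * ρ ^ v.2.1 = l v * ρ ^ v.2.2 := by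
    have hc : qphi ρ (qX ρ * U) e0 = qphi ρ (U * qX ρ) e0 := by
      rw [Subalgebra.mem_center_iff.mp hu (qX ρ)]
    rw [map_mul, map_mul, Module.End.mul_apply, Module.End.mul_apply] at hc
    have hXe0 : qphi ρ (qX ρ) e0 = Finsupp.single ((1:ℕ),(0:ℕ),(0:ℕ)) (1:ℂ) := by
      simp [qphi_qX, Xop, qop_single, he0]
    rw [hXe0, hUw, hUw, map_finsuppSum] at hc
    have hL : (l.sum fun v c => (qphi ρ (qX ρ))
          ((c * ρ ^ (v.2.2 * 0 + v.2.1 * (0 + v.2.2) + v.1 * (0 + v.2.1))) •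
            Finsupp.single (0 + v.1, 0 + v.2.1, 0 + v.2.2) (1:ℂ))) =
        l.sum fun v c =>
          (c * ρ ^ (v.2.1 * (0 + v.2.2) + v.1 * (0 + v.2.1) + v.2.1)) •
          Finsupp.single (v.1 + 1, v.2.1, v.2.2) (1:ℂ) := by
      refine Finsupp.sum_congr fun v _ => ?_
      rw [map_smul, qphi_qX, Xop, qop_single, smul_smul]
      rw [show ((0:ℕ) + v.1 + 1, (0:ℕ) + v.2.1, (0:ℕ) + v.2.2) = (v.1 + 1, v.2.1, v.2.2) by
        simp]
      congr 1
      ring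
    have hR : (l.sum fun v c =>
          (c * ρ ^ (v.2.2 * 1 + v.2.1 * (0 + v.2.2) + v.1 * (0 + v.2.1))) •
            Finsupp.single (1 + v.1, 0 + v.2.1, 0 + v.2.2) (1:ℂ)) =
        l.sum fun v c =>
          (c * ρ ^ (v.2.1 * (0 + v.2.2) + v.1 * (0 + v.2.1) + v.2.2)) •
          Finsupp.single (v.1 + 1, v.2.1, v.2.2) (1:ℂ) := by
      refine Finsupp.sum_congr fun v _ => ?_
      rw [show ((1:ℕ) + v.1, (0:ℕ) + v.2.1, (0:ℕ) + v.2.2) = (v.1 + 1, v.2.1, v.2.2) by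
        simp [Nat.add_comm]]
      congr 1
      ring
    replace hc := hL.symm.trans (hc.trans hR)
    intro v
    have h1 := sum_single_eval l
      (fun v => ρ ^ (v.2.1 * (0 + v.2.2) + v.1 * (0 + v.2.1) + v.2.1))
      (fun v => (v.1 + 1, v.2.1, v.2.2)) shX_inj v
    have h2 := sum_single_eval l
      (fun v => ρ ^ (v.2.1 * (0 + v.2.2) + v.1 * (0 + v.2.1) + v.2.2))
      (fun v => (v.1 + 1, v.2.1, v.2.2)) shX_inj v
    rw [hc] at h1
    rw [h2] at h1
    have hc0 : ρ ^ (v.2.1 * (0 + v.2.2) + v.1 * (0 + v.2.1)) ≠ 0 := pow_ne_zero _ hρ0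
    apply mul_left_cancel₀ hc0
    rw [pow_add, pow_add] at h1
    linear_combination -h1
  have key2 : ∀ v : ℕ × ℕ × ℕ, l v * ρ ^ v.1 = l v * ρ ^ v.2.1 := by
    have hc : qphi ρ (qZ ρ * U) e0 = qphi ρ (U * qZ ρ) e0 := by
      rw [Subalgebra.mem_center_iff.mp hu (qZ ρ)]
    rw [map_mul, map_mul, Module.End.mul_apply, Module.End.mul_apply] at hc
    have hZe0 : qphi ρ (qZ ρ) e0 = Finsupp.single ((0:ℕ),(0:ℕ),(1:ℕ)) (1:ℂ) := by
      simp [qphi_qZ, Zop, qop_single, he0]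
    rw [hZe0, hUw, hUw, map_finsuppSum] at hc
    have hL : (l.sum fun v c => (qphi ρ (qZ ρ))
          ((c * ρ ^ (v.2.2 * 0 + v.2.1 * (0 + v.2.2) + v.1 * (0 + v.2.1))) •
            Finsupp.single (0 + v.1, 0 + v.2.1, 0 + v.2.2) (1:ℂ))) =
        l.sum fun v c =>
          (c * ρ ^ (v.2.1 * (0 + v.2.2) + v.1 * (0 + v.2.1) + v.1)) •
          Finsupp.single (v.1, v.2.1, v.2.2 + 1) (1:ℂ) := by
      refine Finsupp.sum_congr fun v _ => ?_
      rw [map_smul, qphi_qZ, Zop, qop_single, smul_smul]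
      rw [show ((0:ℕ) + v.1, (0:ℕ) + v.2.1, (0:ℕ) + v.2.2 + 1) = (v.1, v.2.1, v.2.2 + 1) by
        simp]
      congr 1
      ring
    have hR : (l.sum fun v c =>
          (c * ρ ^ (v.2.2 * 0 + v.2.1 * (1 + v.2.2) + v.1 * (0 + v.2.1))) •
            Finsupp.single (0 + v.1, 0 + v.2.1, 1 + v.2.2) (1:ℂ)) =
        l.sum fun v c =>
          (c * ρ ^ (v.2.1 * (0 + v.2.2) + v.1 * (0 + v.2.1) + v.2.1)) •
          Finsupp.single (v.1, v.2.1, v.2.2 + 1) (1:ℂ) := by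
      refine Finsupp.sum_congr fun v _ => ?_
      rw [show ((0:ℕ) + v.1, (0:ℕ) + v.2.1, (1:ℕ) + v.2.2) = (v.1, v.2.1, v.2.2 + 1) by
        simp [Nat.add_comm]]
      congr 1
      ring
    replace hc := hL.symm.trans (hc.trans hR)
    intro v
    have h1 := sum_single_eval l
      (fun v => ρ ^ (v.2.1 * (0 + v.2.2) + v.1 * (0 + v.2.1) + v.1))
      (fun v => (v.1, v.2.1, v.2.2 + 1)) shZ_inj v
    have h2 := sum_single_eval l
      (fun v => ρ ^ (v.2.1 * (0 + v.2.2) + v.1 * (0 + v.2.1) + v.2.1))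
      (fun v => (v.1, v.2.1, v.2.2 + 1)) shZ_inj v
    rw [hc] at h1
    rw [h2] at h1
    have hc0 : ρ ^ (v.2.1 * (0 + v.2.2) + v.1 * (0 + v.2.1)) ≠ 0 := pow_ne_zero _ hρ0
    apply mul_left_cancel₀ hc0
    rw [pow_add, pow_add] at h1
    linear_combination -h1
  exact fun v => ⟨key1 v, key2 v⟩

end Central

section Adjoin
variable {ρ : ℂ} {n : ℕ}

lemma mono_mul' (hρ0 : ρ ≠ 0) (v w u : ℕ × ℕ × ℕ)
    (h : u = (v.1 + w.1, v.2.1 + w.2.1, v.2.2 + w.2.2)) :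
    ∃ t : ℂ, t ≠ 0 ∧ mono ρ v * mono ρ w = t • mono ρ u :=
  ⟨_, mul_ne_zero (pow_ne_zero _ hρ0) (pow_ne_zero _ (inv_ne_zero hρ0)),
    by rw [mono_mul hρ0, h]⟩

lemma mono_pow (hρ0 : ρ ≠ 0) (v : ℕ × ℕ × ℕ) (m : ℕ) :
    ∃ s : ℂ, s ≠ 0 ∧ mono ρ v ^ m = s • mono ρ (m * v.1, m * v.2.1, m * v.2.2) := by
  induction m with
  | zero =>
    refine ⟨1, one_ne_zero, ?_⟩
    simp [mono]
  | succ m ih =>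
    obtain ⟨s, hs, hm⟩ := ih
    obtain ⟨t, ht, he⟩ := mono_mul' hρ0 (m * v.1, m * v.2.1, m * v.2.2) v
      ((m+1) * v.1, (m+1) * v.2.1, (m+1) * v.2.2)
      (by simp only [Prod.mk.injEq]; exact ⟨by ring, by ring, by ring⟩)
    refine ⟨s * t, mul_ne_zero hs ht, ?_⟩
    rw [pow_succ, hm, smul_mul_assoc, he, smul_smul]

lemma pow_sub_eq_one (hρ0 : ρ ≠ 0) {a b : ℕ} (h : ρ ^ a = ρ ^ b) (hba : b ≤ a) :
    ρ ^ (a - b) = 1 := by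
  have h2 : ρ ^ (a - b) * ρ ^ b = 1 * ρ ^ b := by
    rw [← pow_add, Nat.sub_add_cancel hba, h, one_mul]
  exact mul_right_cancel₀ (pow_ne_zero _ hρ0) h2

lemma mono_mem_adjoin (hρ : IsPrimitiveRoot ρ n) (hn : 0 < n) (v : ℕ × ℕ × ℕ)
    (h1 : ρ ^ v.1 = ρ ^ v.2.1) (h2 : ρ ^ v.2.1 = ρ ^ v.2.2) :
    mono ρ v ∈ Algebra.adjoin ℂ
      {qX ρ ^ n, qY ρ ^ n, qZ ρ ^ n, qX ρ * qY ρ * qZ ρ} := by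
  have hρn : ρ ^ n = 1 := hρ.pow_eq_one
  have hρ0 : ρ ≠ 0 := by
    rintro rfl
    rw [zero_pow (by omega)] at hρn
    exact zero_ne_one hρn
  obtain ⟨a, b, c⟩ := v
  simp only at h1 h2
  set m : ℕ := min a (min b c) with hm
  have hmabc : m = a ∨ m = b ∨ m = c := by omega
  have hma : ρ ^ a = ρ ^ m := by
    rcases hmabc with h | h | h <;> rw [h]
    exacts [h1, h1.trans h2]
  have hmb : ρ ^ b = ρ ^ m := by rw [← h1]; exact hma
  have hmc : ρ ^ c = ρ ^ m := by rw [← h2, ← h1]; exact hma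
  have hda : n ∣ a - m := (hρ.pow_eq_one_iff_dvd _).mp (pow_sub_eq_one hρ0 hma (by omega))
  have hdb : n ∣ b - m := (hρ.pow_eq_one_iff_dvd _).mp (pow_sub_eq_one hρ0 hmb (by omega))
  have hdc : n ∣ c - m := (hρ.pow_eq_one_iff_dvd _).mp (pow_sub_eq_one hρ0 hmc (by omega))
  obtain ⟨a₁, ha₁⟩ := hda
  obtain ⟨b₁, hb₁⟩ := hdb
  obtain ⟨c₁, hc₁⟩ := hdc
  have ha : a = n * a₁ + m := by omega
  have hb : b = n * b₁ + m := by omega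
  have hc : c = n * c₁ + m := by omega
  set S := Algebra.adjoin ℂ
      {qX ρ ^ n, qY ρ ^ n, qZ ρ ^ n, qX ρ * qY ρ * qZ ρ} with hS
  have hXm : qX ρ ^ n ∈ S := Algebra.subset_adjoin (by simp)
  have hYm : qY ρ ^ n ∈ S := Algebra.subset_adjoin (by simp)
  have hZm : qZ ρ ^ n ∈ S := Algebra.subset_adjoin (by simp)
  have hWm : qX ρ * qY ρ * qZ ρ ∈ S := Algebra.subset_adjoin (by simp)
  obtain ⟨s, hs, hXYZ⟩ := mono_pow hρ0 (1, 1, 1) m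
  have hXYZ' : (qX ρ * qY ρ * qZ ρ) ^ m = s • mono ρ (m, m, m) := by
    rw [show qX ρ * qY ρ * qZ ρ = mono ρ (1, 1, 1) by simp [mono], hXYZ]
    simp
  have hXp : (qX ρ ^ n) ^ a₁ = mono ρ (n * a₁, 0, 0) := by
    simp [mono, ← pow_mul]
  have hYp : (qY ρ ^ n) ^ b₁ = mono ρ (0, n * b₁, 0) := by
    simp [mono, ← pow_mul]
  have hZp : (qZ ρ ^ n) ^ c₁ = mono ρ (0, 0, n * c₁) := by
    simp [mono, ← pow_mul]
  have hT : (qX ρ ^ n) ^ a₁ * ((qY ρ ^ n) ^ b₁ * ((qZ ρ ^ n) ^ c₁ *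
        (qX ρ * qY ρ * qZ ρ) ^ m)) ∈ S :=
    S.mul_mem (S.pow_mem hXm _) (S.mul_mem (S.pow_mem hYm _)
      (S.mul_mem (S.pow_mem hZm _) (S.pow_mem hWm _)))
  obtain ⟨t1, ht1, e1⟩ := mono_mul' hρ0 (0, 0, n * c₁) (m, m, m)
    (m, m, n * c₁ + m) (by simp)
  obtain ⟨t2, ht2, e2⟩ := mono_mul' hρ0 (0, n * b₁, 0) (m, m, n * c₁ + m)
    (m, n * b₁ + m, n * c₁ + m) (by simp)
  obtain ⟨t3, ht3, e3⟩ := mono_mul' hρ0 (n * a₁, 0, 0) (m, n * b₁ + m, n * c₁ + m)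
    (a, b, c) (by rw [ha, hb, hc]; simp)
  have hteq : (qX ρ ^ n) ^ a₁ * ((qY ρ ^ n) ^ b₁ * ((qZ ρ ^ n) ^ c₁ *
        (qX ρ * qY ρ * qZ ρ) ^ m)) = (s * t1 * t2 * t3) • mono ρ (a, b, c) := by
    rw [hXp, hYp, hZp, hXYZ', mul_smul_comm, e1, smul_smul, mul_smul_comm, e2, smul_smul,
      mul_smul_comm, e3, smul_smul]
  have ht : s * t1 * t2 * t3 ≠ 0 :=
    mul_ne_zero (mul_ne_zero (mul_ne_zero hs ht1) ht2) ht3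
  have hfin : mono ρ (a, b, c) = (s * t1 * t2 * t3)⁻¹ •
      ((qX ρ ^ n) ^ a₁ * ((qY ρ ^ n) ^ b₁ * ((qZ ρ ^ n) ^ c₁ *
        (qX ρ * qY ρ * qZ ρ) ^ m))) := by
    rw [hteq, smul_smul, inv_mul_cancel₀ ht, one_smul]
  rw [hfin]
  exact S.smul_mem hT _

end Adjoin

section GenCentral
variable {ρ : ℂ} {n : ℕ}

lemma central_of_mono_comm (hρ0 : ρ ≠ 0) {g : QuantumAlg ρ}
    (h : ∀ v, mono ρ v * g = g * mono ρ v) :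
    g ∈ Subalgebra.center ℂ (QuantumAlg ρ) := by
  rw [Subalgebra.mem_center_iff]
  intro b
  induction mem_span_mono hρ0 b using Submodule.span_induction with
  | mem x hx => obtain ⟨v, rfl⟩ := hx; exact h v
  | zero => simp
  | add x y _ _ h1 h2 => rw [add_mul, mul_add, h1, h2]
  | smul a x _ h1 => rw [smul_mul_assoc, mul_smul_comm, h1]

lemma Xn_central (hρ0 : ρ ≠ 0) (hρn : ρ ^ n = 1) :
    qX ρ ^ n ∈ Subalgebra.center ℂ (QuantumAlg ρ) := by
  have hone : ∀ k : ℕ, (ρ ^ k) ^ n = 1 := fun k => by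
    rw [← pow_mul, mul_comm, pow_mul, hρn, one_pow]
  have hmono : qX ρ ^ n = mono ρ (n, 0, 0) := by simp [mono]
  rw [hmono]
  apply central_of_mono_comm hρ0
  intro v
  rw [mono_mul hρ0, mono_mul hρ0]
  rw [show ((n : ℕ) + v.1, 0 + v.2.1, 0 + v.2.2) = (v.1 + n, v.2.1 + 0, v.2.2 + 0) by
    simp [Nat.add_comm]]
  congr 1
  simp [pow_mul', inv_pow, hρn, hone]

lemma Yn_central (hρ0 : ρ ≠ 0) (hρn : ρ ^ n = 1) :
    qY ρ ^ n ∈ Subalgebra.center ℂ (QuantumAlg ρ) := by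
  have hone : ∀ k : ℕ, (ρ ^ k) ^ n = 1 := fun k => by
    rw [← pow_mul, mul_comm, pow_mul, hρn, one_pow]
  have hmono : qY ρ ^ n = mono ρ (0, n, 0) := by simp [mono]
  rw [hmono]
  apply central_of_mono_comm hρ0
  intro v
  rw [mono_mul hρ0, mono_mul hρ0]
  rw [show ((0 : ℕ) + v.1, n + v.2.1, 0 + v.2.2) = (v.1 + 0, v.2.1 + n, v.2.2 + 0) by
    simp [Nat.add_comm]]
  congr 1
  simp [pow_mul', inv_pow, hρn, hone]

lemma Zn_central (hρ0 : ρ ≠ 0) (hρn : ρ ^ n = 1) :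
    qZ ρ ^ n ∈ Subalgebra.center ℂ (QuantumAlg ρ) := by
  have hone : ∀ k : ℕ, (ρ ^ k) ^ n = 1 := fun k => by
    rw [← pow_mul, mul_comm, pow_mul, hρn, one_pow]
  have hmono : qZ ρ ^ n = mono ρ (0, 0, n) := by simp [mono]
  rw [hmono]
  apply central_of_mono_comm hρ0
  intro v
  rw [mono_mul hρ0, mono_mul hρ0]
  rw [show ((0 : ℕ) + v.1, 0 + v.2.1, n + v.2.2) = (v.1 + 0, v.2.1 + 0, v.2.2 + n) by
    simp [Nat.add_comm]]
  congr 1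
  simp [pow_mul', inv_pow, hρn, hone]

lemma XYZ_central (hρ0 : ρ ≠ 0) :
    qX ρ * qY ρ * qZ ρ ∈ Subalgebra.center ℂ (QuantumAlg ρ) := by
  have hmono : qX ρ * qY ρ * qZ ρ = mono ρ (1, 1, 1) := by simp [mono]
  rw [hmono]
  apply central_of_mono_comm hρ0
  intro v
  rw [mono_mul hρ0, mono_mul hρ0]
  rw [show ((1 : ℕ) + v.1, 1 + v.2.1, 1 + v.2.2) = (v.1 + 1, v.2.1 + 1, v.2.2 + 1) by
    simp [Nat.add_comm]]
  congr 1
  field_simp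
  have h : ∀ k : ℕ, ρ ^ k * ρ⁻¹ ^ k = 1 := fun k => by rw [← mul_pow, mul_inv_cancel₀ hρ0, one_pow]
  linear_combination (ρ⁻¹ ^ v.2.1) * h v.2.2 - ρ⁻¹ ^ v.2.1 * h v.1

end GenCentral

theorem center_eq_adjoin' (n : ℕ) (hn : 1 < n) (ρ : ℂ) (hρ : IsPrimitiveRoot ρ n) :
    Subalgebra.center ℂ (QuantumAlg ρ) =
      Algebra.adjoin ℂ {qX ρ ^ n, qY ρ ^ n, qZ ρ ^ n, qX ρ * qY ρ * qZ ρ} := by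
  have hρn : ρ ^ n = 1 := hρ.pow_eq_one
  have hρ0 : ρ ≠ 0 := by
    rintro rfl
    rw [zero_pow (by omega)] at hρn
    exact zero_ne_one hρn
  apply le_antisymm
  · intro u hu
    obtain ⟨l, hl⟩ := Finsupp.mem_span_range_iff_exists_finsupp.mp (mem_span_mono hρ0 u)
    have hcon := central_constraints hρ0 l (by rw [hl]; exact hu)
    rw [← hl, Finsupp.sum]
    apply Subalgebra.sum_mem
    intro v _
    by_cases hv0 : l v = 0
    · rw [hv0, zero_smul]; exact Subalgebra.zero_mem _
    · obtain ⟨c1, c2⟩ := hcon v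
      have h1 : ρ ^ v.1 = ρ ^ v.2.1 := mul_left_cancel₀ hv0 c2
      have h2 : ρ ^ v.2.1 = ρ ^ v.2.2 := mul_left_cancel₀ hv0 c1
      exact Subalgebra.smul_mem _ (mono_mem_adjoin hρ (by omega) v h1 h2) _
  · apply Algebra.adjoin_le
    intro g hg
    simp only [Set.mem_insert_iff, Set.mem_singleton_iff] at hg
    rcases hg with rfl | rfl | rfl | rfl
    · exact Xn_central hρ0 hρn
    · exact Yn_central hρ0 hρn
    · exact Zn_central hρ0 hρn
    · exact XYZ_central hρ0

/-- For `n > 1` and `ρ` a primitive `n`-th root of unity, the center of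
`ℂ_ρ[x,y,z]` is the subalgebra generated by the images of `x^n, y^n, z^n, xyz`. -/
theorem center_eq_adjoin (n : ℕ) (hn : 1 < n) (ρ : ℂ) (hρ : IsPrimitiveRoot ρ n) :
    Subalgebra.center ℂ (QuantumAlg ρ) =
      Algebra.adjoin ℂ {qX ρ ^ n, qY ρ ^ n, qZ ρ ^ n, qX ρ * qY ρ * qZ ρ} :=
  center_eq_adjoin' n hn ρ hρ
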